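/- Let u be the real Lie algebra with basis J₁, J₂, J₃ and brackets [Jᵢ, Jⱼ] = ε_{ijk} J_k (so u ≅ su(2) up to scaling), and let g = u ⊕ iu be its complexification with additional generators Kᵢ = iJᵢ satisfying [Jᵢ, Kⱼ] = ε_{ijk} K_k and [Kᵢ, Kⱼ] = −ε_{ijk} J_k. Then the map into the semidirect sum g ⋉ g (bracket [ζ⊕ξ, ζ'⊕ξ'] = ([ζ,ζ'] + [ξ,ζ'] − [ξ',ζ]) ⊕ [ξ,ξ']) defined by Jᵢ ↦ 0 ⊕ Jᵢ and Kᵢ ↦ 2Kᵢ ⊕ (−Kᵢ), extended ℝ-linearly, is an injective homomorphism of real Lie algebras. -/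

import Mathlib

open scoped TensorProduct

/-- The totally antisymmetric Levi-Civita symbol on `Fin 3` with `ε₁₂₃ = 1`. -/
def leviCivita : Fin 3 → Fin 3 → Fin 3 → ℝ := fun i j k =>
  if (i, j, k) = (0, 1, 2) ∨ (i, j, k) = (1, 2, 0) ∨ (i, j, k) = (2, 0, 1) then 1
  else if (i, j, k) = (0, 2, 1) ∨ (i, j, k) = (2, 1, 0) ∨ (i, j, k) = (1, 0, 2) then -1
  else 0

/-- The semidirect sum bracket `[ζ⊕ξ, ζ'⊕ξ'] = ([ζ,ζ'] + [ξ,ζ'] − [ξ',ζ]) ⊕ [ξ,ξ']`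
on `g ⊕ g`. -/
def sdSumBracket {g : Type*} [LieRing g] (p q : g × g) : g × g :=
  (⁅p.1, q.1⁆ + ⁅p.2, q.1⁆ - ⁅q.2, p.1⁆, ⁅p.2, q.2⁆)

section Aux

variable {u : Type*} [LieRing u] [LieAlgebra ℝ u]

lemma aux_tmul (s t : ℂ) (x y : u) :
    ⁅s ⊗ₜ[ℝ] x, t ⊗ₜ[ℝ] y⁆ = (s * t) ⊗ₜ[ℝ] ⁅x, y⁆ := rfl

lemma aux_add_lie (x x' y : ℂ ⊗[ℝ] u) : ⁅x + x', y⁆ = ⁅x, y⁆ + ⁅x', y⁆ := add_lie x x' y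

lemma aux_lie_add (x y y' : ℂ ⊗[ℝ] u) : ⁅x, y + y'⁆ = ⁅x, y⁆ + ⁅x, y'⁆ := lie_add x y y'

lemma aux_smul_lie (r : ℝ) (x y : ℂ ⊗[ℝ] u) : ⁅r • x, y⁆ = r • ⁅x, y⁆ := by
  rw [← algebraMap_smul ℂ r x, ← algebraMap_smul ℂ r ⁅x, y⁆]
  exact smul_lie (algebraMap ℝ ℂ r) x y

lemma aux_lie_smul (r : ℝ) (x y : ℂ ⊗[ℝ] u) : ⁅x, r • y⁆ = r • ⁅x, y⁆ := by
  rw [← algebraMap_smul ℂ r y, ← algebraMap_smul ℂ r ⁅x, y⁆]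
  exact lie_smul (algebraMap ℝ ℂ r) x y

lemma aux_zero_lie (y : ℂ ⊗[ℝ] u) : ⁅(0 : ℂ ⊗[ℝ] u), y⁆ = 0 := zero_lie y

lemma aux_lie_zero (x : ℂ ⊗[ℝ] u) : ⁅x, (0 : ℂ ⊗[ℝ] u)⁆ = 0 := lie_zero x

lemma aux_neg_lie (x y : ℂ ⊗[ℝ] u) : ⁅-x, y⁆ = -⁅x, y⁆ := neg_lie x y

lemma aux_lie_neg (x y : ℂ ⊗[ℝ] u) : ⁅x, -y⁆ = -⁅x, y⁆ := lie_neg x y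

end Aux

/-- Let `u` be the real Lie algebra with basis `J₁, J₂, J₃` and brackets
`[Jᵢ, Jⱼ] = ε_{ijk} J_k` (so `u ≅ su(2)`), and let `g = ℂ ⊗_ℝ u` be its complexification
with `Kᵢ = i ⊗ Jᵢ`.  Then the `ℝ`-linear map into the semidirect sum `g ⋉ g` determined
by `Jᵢ ↦ 0 ⊕ Jᵢ` and `Kᵢ ↦ 2Kᵢ ⊕ (−Kᵢ)` is an injective homomorphism of real Lie
algebras. -/
theorem su2_complexification_embeds
    {u : Type*} [LieRing u] [LieAlgebra ℝ u]
    (J : Fin 3 → u) (bJ : Module.Basis (Fin 3) ℝ u) (hbJ : ∀ i, bJ i = J i)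
    (hJ : ∀ i j : Fin 3, ⁅J i, J j⁆ = ∑ k, leviCivita i j k • J k)
    (φ : (ℂ ⊗[ℝ] u) →ₗ[ℝ] (ℂ ⊗[ℝ] u) × (ℂ ⊗[ℝ] u))
    (hφJ : ∀ i, φ ((1 : ℂ) ⊗ₜ[ℝ] J i) = (0, (1 : ℂ) ⊗ₜ[ℝ] J i))
    (hφK : ∀ i, φ (Complex.I ⊗ₜ[ℝ] J i) =
      ((2 : ℝ) • (Complex.I ⊗ₜ[ℝ] J i), -(Complex.I ⊗ₜ[ℝ] J i))) :
    Function.Injective φ ∧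
      ∀ x y : ℂ ⊗[ℝ] u, φ ⁅x, y⁆ = sdSumBracket (φ x) (φ y) := by
  set b : Module.Basis (Fin 2 × Fin 3) ℝ (ℂ ⊗[ℝ] u) := Module.Basis.tensorProduct Complex.basisOneI bJ with hb
  have hb0 : ∀ i : Fin 3, b (0, i) = (1 : ℂ) ⊗ₜ[ℝ] J i := by
    intro i; simp [hb, Module.Basis.tensorProduct_apply, Complex.coe_basisOneI, hbJ]
  have hb1 : ∀ i : Fin 3, b (1, i) = Complex.I ⊗ₜ[ℝ] J i := by
    intro i; simp [hb, Module.Basis.tensorProduct_apply, Complex.coe_basisOneI, hbJ]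
  constructor
  · set c : (ℂ ⊗[ℝ] u) ≃ₗ[ℝ] (ℂ ⊗[ℝ] u) :=
      TensorProduct.congr Complex.conjLIE.toLinearEquiv (LinearEquiv.refl ℝ u) with hc
    have hsnd : (LinearMap.snd ℝ (ℂ ⊗[ℝ] u) (ℂ ⊗[ℝ] u)).comp φ = (c : (ℂ ⊗[ℝ] u) →ₗ[ℝ] _) := by
      apply b.ext
      rintro ⟨p, i⟩
      fin_cases p
      · simp [hb0, hφJ, hc, TensorProduct.congr_tmul]
      · simp [hb1, hφK, hc, TensorProduct.congr_tmul, TensorProduct.neg_tmul]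
    intro x y hxy
    apply c.injective
    have hx := LinearMap.congr_fun hsnd x
    have hy := LinearMap.congr_fun hsnd y
    simp only [LinearMap.comp_apply, LinearMap.snd_apply, LinearEquiv.coe_coe] at hx hy
    rw [← hx, ← hy, hxy]
  · set F : (ℂ ⊗[ℝ] u) →ₗ[ℝ] (ℂ ⊗[ℝ] u) →ₗ[ℝ] ((ℂ ⊗[ℝ] u) × (ℂ ⊗[ℝ] u)) :=
      LinearMap.mk₂ ℝ (fun x y => φ ⁅x, y⁆)
        (fun x x' y => by rw [aux_add_lie, map_add])
        (fun r x y => by rw [aux_smul_lie, map_smul])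
        (fun x y y' => by rw [aux_lie_add, map_add])
        (fun r x y => by rw [aux_lie_smul, map_smul]) with hF
    set G : (ℂ ⊗[ℝ] u) →ₗ[ℝ] (ℂ ⊗[ℝ] u) →ₗ[ℝ] ((ℂ ⊗[ℝ] u) × (ℂ ⊗[ℝ] u)) :=
      LinearMap.mk₂ ℝ (fun x y => sdSumBracket (φ x) (φ y))
        (fun x x' y => by
          simp only [sdSumBracket, map_add, Prod.fst_add, Prod.snd_add, aux_add_lie, aux_lie_add,
            Prod.mk_add_mk, Prod.mk.injEq]
          exact ⟨by abel, trivial⟩)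
        (fun r x y => by
          simp only [sdSumBracket, map_smul, Prod.smul_fst, Prod.smul_snd, aux_smul_lie,
            aux_lie_smul, Prod.smul_mk, smul_add, smul_sub])
        (fun x y y' => by
          simp only [sdSumBracket, map_add, Prod.fst_add, Prod.snd_add, aux_add_lie, aux_lie_add,
            Prod.mk_add_mk, Prod.mk.injEq]
          exact ⟨by abel, trivial⟩)
        (fun r x y => by
          simp only [sdSumBracket, map_smul, Prod.smul_fst, Prod.smul_snd, aux_smul_lie,
            aux_lie_smul, Prod.smul_mk, smul_add, smul_sub]) with hG
    have hexp : ∀ (s : ℂ) (i j : Fin 3),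
        φ (s ⊗ₜ[ℝ] ⁅J i, J j⁆) = ∑ k, leviCivita i j k • φ (s ⊗ₜ[ℝ] J k) := by
      intro s i j
      rw [hJ, TensorProduct.tmul_sum, map_sum]
      refine Finset.sum_congr rfl fun k _ => ?_
      rw [TensorProduct.tmul_smul, map_smul]
    have htens : ∀ (s : ℂ) (i j : Fin 3),
        (s ⊗ₜ[ℝ] ⁅J i, J j⁆ : ℂ ⊗[ℝ] u) = ∑ k, leviCivita i j k • (s ⊗ₜ[ℝ] J k) := by
      intro s i j
      rw [hJ, TensorProduct.tmul_sum]
      exact Finset.sum_congr rfl fun k _ => TensorProduct.tmul_smul _ _ _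
    have hskew : ∀ i j : Fin 3, (⁅J j, J i⁆ : u) = -⁅J i, J j⁆ := by
      intro i j; rw [← lie_skew (J i) (J j), neg_neg]
    have key : F = G := by
      apply LinearMap.ext_basis b b
      rintro ⟨p, i⟩ ⟨q, j⟩
      have hFG : ∀ x y, F x y = φ ⁅x, y⁆ := fun _ _ => rfl
      have hGG : ∀ x y, G x y = sdSumBracket (φ x) (φ y) := fun _ _ => rfl
      rw [hFG, hGG]
      fin_cases p <;> fin_cases q <;>
        simp only [Fin.zero_eta, Fin.mk_one, hb0, hb1, aux_tmul, one_mul, mul_one,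
          Complex.I_mul_I, hexp, hφJ, hφK, sdSumBracket, aux_zero_lie, aux_lie_zero,
          aux_neg_lie, aux_lie_neg, aux_smul_lie, aux_lie_smul, aux_tmul]
      · -- (J, J)
        rw [Prod.ext_iff]
        refine ⟨?_, ?_⟩
        · simp [Prod.fst_sum]
        · simp [Prod.snd_sum, htens]
      · -- (J, K)
        rw [Prod.ext_iff]
        refine ⟨?_, ?_⟩
        · simp only [Prod.fst_sum, Prod.smul_mk, htens, Finset.smul_sum, smul_smul,
            smul_zero, zero_add, sub_zero]
          exact Finset.sum_congr rfl fun k _ => by rw [mul_comm]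
        · simp [Prod.snd_sum, Prod.smul_mk, htens, smul_neg, Finset.sum_neg_distrib]
      · -- (K, J)
        rw [Prod.ext_iff]
        refine ⟨?_, ?_⟩
        · rw [hskew i j]
          simp only [Prod.fst_sum, Prod.smul_mk, TensorProduct.tmul_neg, htens,
            Finset.smul_sum, smul_smul, smul_neg, zero_add, zero_sub, neg_neg,
            Finset.sum_neg_distrib]
          exact Finset.sum_congr rfl fun k _ => by rw [mul_comm]
        · simp [Prod.snd_sum, Prod.smul_mk, htens, smul_neg, Finset.sum_neg_distrib]
      · -- (K, K)
        rw [Prod.ext_iff]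
        refine ⟨?_, ?_⟩
        · rw [hskew i j]
          simp only [TensorProduct.neg_tmul, map_neg, hφJ, Prod.fst_sum, Prod.smul_mk,
            Prod.neg_mk, neg_zero, smul_zero, Finset.sum_const_zero,
            TensorProduct.tmul_neg, neg_neg, smul_neg]
          module
        · simp only [TensorProduct.neg_tmul, map_neg, hφJ, Prod.snd_sum, Prod.smul_mk,
            Prod.neg_mk, htens, smul_neg, Finset.sum_neg_distrib, neg_neg]
    intro x y
    have := LinearMap.congr_fun (LinearMap.congr_fun key x) y
    exact this
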